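/- Let A be a commutative ring and T_1, …, T_n ∈ A. Let R = A[Y_0, …, Y_{n-1}] be the polynomial ring, consider R[[Q_1, …, Q_{n-1}]] with the convention Q_0 = 0, and let J_Q ⊆ R[[Q]] be the ideal generated by the coefficients of y, y^2, …, y^n in ∏_{ℓ=1}^{n}(1 + y T_ℓ) − D(1 + y Y_0/(1−Q_0), …, 1 + y Y_{n-1}/(1−Q_{n-1}); y Y_1 Q_1/(1−Q_1), …, y Y_{n-1} Q_{n-1}/(1−Q_{n-1})). Then ∏_{j=0}^{n-1} Y_j ≡ (T_1⋯T_n) · ∏_{j=1}^{n-1}(1 − Q_j) modulo J_Q. In particular, if T_1⋯T_n is a unit of A, then the image of each Y_j in R[[Q]]/J_Q is a unit. -/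

import Mathlib

noncomputable section

/-- The Novikov variable `Q_j` for `1 ≤ j ≤ n-1` in the power series ring
`C[[Q_1, …, Q_{n-1}]]`, with the convention `Q_0 = 0`. -/
def Qv (C : Type*) [CommRing C] (n : ℕ) (j : ℕ) : MvPowerSeries (Fin (n - 1)) C :=
  if h : 1 ≤ j ∧ j ≤ n - 1 then MvPowerSeries.X ⟨j - 1, by omega⟩ else 0

/-- The tridiagonal determinant `D(A_0, …, A_{m-1}; B_1, …, B_{m-1})` of size `m`:
diagonal entries `A 0, …, A (m-1)`, superdiagonal entry in position `(i, i+1)`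
equal to `B (i+1)`, subdiagonal entries `1`, all other entries `0`. -/
def triDet {R : Type*} [CommRing R] (m : ℕ) (A B : ℕ → R) : R :=
  Matrix.det (Matrix.of fun i j : Fin m =>
    if (i : ℕ) = (j : ℕ) then A i
    else if (i : ℕ) + 1 = (j : ℕ) then B j
    else if (j : ℕ) + 1 = (i : ℕ) then 1
    else 0)

/-- The variable `Y_j` of the polynomial ring `A[Y_0, …, Y_{n-1}]`, for `0 ≤ j < n`. -/
def Ymon (A : Type*) [CommRing A] (n : ℕ) (j : ℕ) : MvPolynomial (Fin n) A :=
  if h : j < n then MvPolynomial.X ⟨j, h⟩ else 0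

/-- The diagonal entry `1 + y · Y_j/(1 - Q_j)` of the Toda determinant (`Q_0 = 0`). -/
def ytodaA (A : Type*) [CommRing A] (n : ℕ) (j : ℕ) :
    Polynomial (MvPowerSeries (Fin (n - 1)) (MvPolynomial (Fin n) A)) :=
  1 + Polynomial.C (MvPowerSeries.C (Ymon A n j) *
        Ring.inverse (1 - Qv _ n j)) * Polynomial.X

/-- The superdiagonal entry `y · Y_j · Q_j/(1 - Q_j)` of the Toda determinant. -/
def ytodaB (A : Type*) [CommRing A] (n : ℕ) (j : ℕ) :
    Polynomial (MvPowerSeries (Fin (n - 1)) (MvPolynomial (Fin n) A)) :=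
  Polynomial.C (MvPowerSeries.C (Ymon A n j) * Qv _ n j *
      Ring.inverse (1 - Qv _ n j)) * Polynomial.X

/-- `∏_{ℓ=1}^{n} (1 + y T_ℓ) - D(1 + y Y_0/(1-Q_0), …, 1 + y Y_{n-1}/(1-Q_{n-1});
y Y_1 Q_1/(1-Q_1), …, y Y_{n-1} Q_{n-1}/(1-Q_{n-1}))`. -/
def ytodaRel (A : Type*) [CommRing A] (n : ℕ) (T : Fin n → A) :
    Polynomial (MvPowerSeries (Fin (n - 1)) (MvPolynomial (Fin n) A)) :=
  (∏ ℓ : Fin n,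
      (1 + Polynomial.C (MvPowerSeries.C
            (algebraMap A (MvPolynomial (Fin n) A) (T ℓ))) * Polynomial.X))
    - triDet n (ytodaA A n) (ytodaB A n)

/-- The ideal `J_Q ⊆ R[[Q]]` generated by the coefficients of `y, y^2, …, y^n`
in the Toda relation. -/
def ytodaIdeal (A : Type*) [CommRing A] (n : ℕ) (T : Fin n → A) :
    Ideal (MvPowerSeries (Fin (n - 1)) (MvPolynomial (Fin n) A)) :=
  Ideal.span {x | ∃ i : ℕ, 1 ≤ i ∧ i ≤ n ∧ x = (ytodaRel A n T).coeff i}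

open Polynomial in
lemma aux_deg_prod {R ι : Type*} [CommRing R] (s : Finset ι) (f : ι → Polynomial R)
    (h : ∀ i ∈ s, (f i).degree ≤ 1) : (∏ i ∈ s, f i).degree ≤ (s.card : ℕ) := by
  classical
  calc (∏ i ∈ s, f i).degree ≤ ∑ i ∈ s, (f i).degree := degree_prod_le s f
  _ ≤ ∑ _i ∈ s, (1 : WithBot ℕ) := Finset.sum_le_sum h
  _ = (s.card : ℕ) := by simp [Finset.sum_const]

open Polynomial in
lemma aux_coeff_prod {R ι : Type*} [CommRing R] (s : Finset ι) (f : ι → Polynomial R)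
    (h : ∀ i ∈ s, (f i).degree ≤ 1) :
    (∏ i ∈ s, f i).coeff s.card = ∏ i ∈ s, (f i).coeff 1 := by
  classical
  induction s using Finset.cons_induction with
  | empty => simp
  | cons a s ha ih =>
    have hdeg : (∏ i ∈ s, f i).degree ≤ (s.card : ℕ) :=
      aux_deg_prod s f (fun i hi => h i (Finset.mem_cons_of_mem hi))
    have ha1 : (f a).degree ≤ 1 := h a (Finset.mem_cons_self a s)
    have hlt : (∏ i ∈ s, f i).degree < ((s.card + 1 : ℕ) : WithBot ℕ) :=
      lt_of_le_of_lt hdeg (Nat.cast_lt.mpr (Nat.lt_succ_self _))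
    rw [Finset.prod_cons, Finset.prod_cons, Finset.card_cons]
    calc (f a * ∏ i ∈ s, f i).coeff (s.card + 1)
        = ((C ((f a).coeff 1) * X + C ((f a).coeff 0)) * ∏ i ∈ s, f i).coeff (s.card + 1) := by
          rw [← eq_X_add_C_of_degree_le_one ha1]
      _ = (f a).coeff 1 * (∏ i ∈ s, f i).coeff s.card := by
          rw [add_mul, mul_assoc, coeff_add, coeff_C_mul, coeff_C_mul, coeff_X_mul,
            coeff_eq_zero_of_degree_lt hlt, mul_zero, add_zero]
      _ = (f a).coeff 1 * ∏ i ∈ s, (f i).coeff 1 := by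
          rw [ih (fun i hi => h i (Finset.mem_cons_of_mem hi))]

open Polynomial in
lemma aux_coeff_det {R : Type*} [CommRing R] (m : ℕ)
    (M : Matrix (Fin m) (Fin m) (Polynomial R)) (h : ∀ i j, (M i j).degree ≤ 1) :
    (M.det).coeff m = Matrix.det (Matrix.of fun i j => (M i j).coeff 1) := by
  rw [Matrix.det_apply, Matrix.det_apply, finset_sum_coeff]
  refine Finset.sum_congr rfl fun σ _ => ?_
  rw [coeff_smul]
  congr 1
  have h2 := aux_coeff_prod (Finset.univ : Finset (Fin m)) (fun i => M (σ i) i)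
    (fun i _ => h _ _)
  simpa using h2

open Polynomial in
lemma aux_coeff_prod_fin {R : Type*} [CommRing R] (n : ℕ) (f : Fin n → Polynomial R)
    (h : ∀ i, (f i).degree ≤ 1) :
    (∏ i : Fin n, f i).coeff n = ∏ i : Fin n, (f i).coeff 1 := by
  have := aux_coeff_prod (Finset.univ : Finset (Fin n)) f (fun i _ => h i)
  simpa using this

open Polynomial in
lemma coeff_ytodaRel (A : Type*) [CommRing A] (n : ℕ) (T : Fin n → A) :
    (ytodaRel A n T).coeff n =
      MvPowerSeries.C (algebraMap A (MvPolynomial (Fin n) A) (∏ ℓ : Fin n, T ℓ))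
        - ∏ j : Fin n, (MvPowerSeries.C (σ := Fin (n-1)) (R := MvPolynomial (Fin n) A) (Ymon A n j) *
            Ring.inverse (1 - Qv (MvPolynomial (Fin n) A) n j)) := by
  have hcard : ((Finset.univ : Finset (Fin n)).card) = n := by simp
  rw [ytodaRel, coeff_sub]
  congr 1
  · -- product of linear factors
    rw [aux_coeff_prod_fin n _ (fun ℓ =>
      le_trans (Polynomial.degree_add_le _ _) (max_le
        (le_trans Polynomial.degree_one_le (by norm_num)) (Polynomial.degree_C_mul_X_le _)))]
    simp only [coeff_add, coeff_one, coeff_C_mul, coeff_X_one, mul_one]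
    norm_num
  · -- determinant part
    rw [triDet, aux_coeff_det]
    · rw [Matrix.det_of_upperTriangular]
      · apply Finset.prod_congr rfl
        intro i _
        simp [ytodaA, coeff_one]
      · intro i j hji
        have hlt : (j : ℕ) < (i : ℕ) := hji
        have h1 : ¬ ((i : ℕ) = (j : ℕ)) := by omega
        have h2 : ¬ ((i : ℕ) + 1 = (j : ℕ)) := by omega
        simp only [Matrix.of_apply, h1, h2, if_false]
        split_ifs <;> simp [coeff_one]
    · intro i j
      simp only [Matrix.of_apply]
      split_ifs
      · exact le_trans (degree_add_le _ _) (max_le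
          (le_trans degree_one_le (by norm_num)) (degree_C_mul_X_le _))
      · exact degree_C_mul_X_le _
      · exact le_trans degree_one_le (by norm_num)
      · simp

/-- In the Toda presentation `R[[Q]]/J_Q` of `QK_T(Fl(n))` one has
`∏_{j=0}^{n-1} Y_j ≡ (T_1 ⋯ T_n) · ∏_{j=1}^{n-1} (1 - Q_j)` modulo `J_Q`;
in particular, if `T_1 ⋯ T_n` is a unit of `A`, then the image of each `Y_j`
in `R[[Q]]/J_Q` is a unit. -/
theorem prod_Y_eq_prod_T_mod_todaIdeal (A : Type*) [CommRing A] (n : ℕ)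
    (T : Fin n → A) :
    ((∏ j ∈ Finset.range n, MvPowerSeries.C (Ymon A n j))
        - MvPowerSeries.C (σ := Fin (n - 1)) (R := MvPolynomial (Fin n) A)
            (algebraMap A (MvPolynomial (Fin n) A) (∏ ℓ : Fin n, T ℓ)) *
          ∏ j ∈ Finset.Icc 1 (n - 1), (1 - Qv (MvPolynomial (Fin n) A) n j)
      ∈ ytodaIdeal A n T) ∧
    (IsUnit (∏ ℓ : Fin n, T ℓ) → ∀ j : ℕ, j < n →
      IsUnit (Ideal.Quotient.mk (ytodaIdeal A n T)
        (MvPowerSeries.C (Ymon A n j)))) := by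
  classical
  rcases Nat.eq_zero_or_pos n with hn | hn
  · subst hn
    constructor
    · have : Finset.Icc 1 (0-1) = (∅ : Finset ℕ) := by decide
      simp only [Finset.range_zero, Finset.prod_empty, this, Finset.univ_eq_empty,
        map_one, mul_one, sub_self]
      exact Ideal.zero_mem _
    · intro _ j hj; omega
  -- notation
  set R := MvPowerSeries (Fin (n - 1)) (MvPolynomial (Fin n) A) with hR
  have hu1 : ∀ j : ℕ, IsUnit ((1 : R) - Qv (MvPolynomial (Fin n) A) n j) := by
    intro j
    rw [MvPowerSeries.isUnit_iff_constantCoeff]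
    unfold Qv
    split_ifs <;> simp
  have hinv : ∀ j : ℕ, ((1 : R) - Qv (MvPolynomial (Fin n) A) n j) *
      Ring.inverse ((1 : R) - Qv (MvPolynomial (Fin n) A) n j) = 1 :=
    fun j => Ring.mul_inverse_cancel _ (hu1 j)
  have hrange : Finset.range n = insert 0 (Finset.Icc 1 (n-1)) := by
    ext k; simp [Finset.mem_range, Finset.mem_insert, Finset.mem_Icc]; omega
  have hQ0 : Qv (MvPolynomial (Fin n) A) n 0 = 0 := by
    unfold Qv; rw [dif_neg]; omega
  set P : R := ∏ j ∈ Finset.Icc 1 (n - 1), ((1 : R) - Qv (MvPolynomial (Fin n) A) n j) with hPdef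
  have hP : ∏ j ∈ Finset.range n, ((1:R) - Qv (MvPolynomial (Fin n) A) n j) = P := by
    rw [hrange, Finset.prod_insert (by simp), hQ0, sub_zero, one_mul]
  have hkey : (∏ j ∈ Finset.range n, MvPowerSeries.C (Ymon A n j) : R)
      = P * ∏ j : Fin n, (MvPowerSeries.C (σ := Fin (n-1)) (R := MvPolynomial (Fin n) A) (Ymon A n j) *
          Ring.inverse ((1:R) - Qv (MvPolynomial (Fin n) A) n j)) := by
    rw [Fin.prod_univ_eq_prod_range
      (fun j => MvPowerSeries.C (σ := Fin (n-1)) (R := MvPolynomial (Fin n) A) (Ymon A n j) *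
        Ring.inverse ((1:R) - Qv (MvPolynomial (Fin n) A) n j)) n, ← hP,
      ← Finset.prod_mul_distrib]
    refine Finset.prod_congr rfl fun j _ => ?_
    linear_combination (-(MvPowerSeries.C (σ := Fin (n-1)) (R := MvPolynomial (Fin n) A) (Ymon A n j))) * hinv j
  have hmem : (ytodaRel A n T).coeff n ∈ ytodaIdeal A n T :=
    Ideal.subset_span ⟨n, hn, le_rfl, rfl⟩
  have hpart1 : ((∏ j ∈ Finset.range n, MvPowerSeries.C (Ymon A n j))
        - MvPowerSeries.C (σ := Fin (n - 1)) (R := MvPolynomial (Fin n) A)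
            (algebraMap A (MvPolynomial (Fin n) A) (∏ ℓ : Fin n, T ℓ)) *
          ∏ j ∈ Finset.Icc 1 (n - 1), (1 - Qv (MvPolynomial (Fin n) A) n j)
      ∈ ytodaIdeal A n T) := by
    have heq : (∏ j ∈ Finset.range n, MvPowerSeries.C (Ymon A n j) : R)
        - MvPowerSeries.C (σ := Fin (n - 1)) (R := MvPolynomial (Fin n) A)
            (algebraMap A (MvPolynomial (Fin n) A) (∏ ℓ : Fin n, T ℓ)) * P
        = (-P) * ((ytodaRel A n T).coeff n) := by
      rw [coeff_ytodaRel, hkey]; ring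
    rw [← hPdef, heq]
    exact Ideal.mul_mem_left _ _ hmem
  refine ⟨hpart1, fun hu j hj => ?_⟩
  have hq : Ideal.Quotient.mk (ytodaIdeal A n T)
        (∏ j ∈ Finset.range n, MvPowerSeries.C (Ymon A n j) : R)
      = Ideal.Quotient.mk (ytodaIdeal A n T)
        (MvPowerSeries.C (σ := Fin (n - 1)) (R := MvPolynomial (Fin n) A)
            (algebraMap A (MvPolynomial (Fin n) A) (∏ ℓ : Fin n, T ℓ)) * P) :=
    Ideal.Quotient.eq.mpr hpart1
  have hPu : IsUnit P := by
    refine Finset.prod_induction _ IsUnit (fun a b => IsUnit.mul) isUnit_one ?_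
    exact fun j _ => hu1 j
  have hrhs : IsUnit (Ideal.Quotient.mk (ytodaIdeal A n T)
      (MvPowerSeries.C (σ := Fin (n - 1)) (R := MvPolynomial (Fin n) A)
          (algebraMap A (MvPolynomial (Fin n) A) (∏ ℓ : Fin n, T ℓ)) * P)) := by
    rw [map_mul]
    exact (((hu.map (algebraMap A (MvPolynomial (Fin n) A))).map
      (MvPowerSeries.C (σ := Fin (n-1)) (R := MvPolynomial (Fin n) A))).map
      (Ideal.Quotient.mk (ytodaIdeal A n T))).mul (hPu.map _)
  have hprod : IsUnit (∏ k ∈ Finset.range n,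
      Ideal.Quotient.mk (ytodaIdeal A n T) (MvPowerSeries.C (Ymon A n k))) := by
    rw [← map_prod]
    rw [hq]
    exact hrhs
  exact isUnit_of_dvd_unit (Finset.dvd_prod_of_mem
    (fun k => Ideal.Quotient.mk (ytodaIdeal A n T) (MvPowerSeries.C (Ymon A n k)))
    (Finset.mem_range.mpr hj)) hprod

end
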